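/- For a VPA A, a state p is not a bin state if and only if p belongs to the set R = { p ∈ Q | ∃ words w, w', stack σ, final state q, with runs (q₀, ε) →^{w} (q₀, σ) and (p, σ) →^{w'} (q, ε) }, provided A is a 1-SEVPA in which every state is reachable (minimal). -/

import Mathlib

/-- Symbols of a pushdown alphabet: call symbols from `C`, matching return symbols
(one `ret a` for each call `a`), and internal symbols from `I`. -/
inductive PSym (C I : Type) : Type
  | call : C → PSym C I
  | ret  : C → PSym C I
  | int  : I → PSym C I

/-- Weight of a symbol for the call/return balance. -/
def symWeight {C I : Type} : PSym C I → ℤ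
  | .call _ => 1
  | .ret _ => -1
  | .int _ => 0

/-- The call/return balance function β. -/
def balance {C I : Type} (w : List (PSym C I)) : ℤ :=
  (w.map symWeight).sum

/-- Well-matched words over a pushdown alphabet. -/
inductive WM {C I : Type} : List (PSym C I) → Prop
  | empty : WM []
  | int (i : I) : WM [PSym.int i]
  | append {w w' : List (PSym C I)} : WM w → WM w' → WM (w ++ w')
  | wrap (a : C) {w : List (PSym C I)} : WM w → WM (PSym.call a :: w ++ [PSym.ret a])

/-- A visibly pushdown automaton over the pushdown alphabet `(C, {ā | a ∈ C}, I)`,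
with states `Q` and stack alphabet `Γ`. -/
structure VPA (C I Q Γ : Type) where
  callTr : Q → C → Q → Γ → Prop
  retTr  : Q → C → Γ → Q → Prop
  intTr  : Q → I → Q → Prop
  init : Set Q
  final : Set Q

/-- One step of the transition system of a VPA on configurations (state, stack). -/
inductive VPA.Step {C I Q Γ : Type} (A : VPA C I Q Γ) :
    Q × List Γ → PSym C I → Q × List Γ → Prop
  | call {q q' : Q} {γ : Γ} {σ : List Γ} {a : C} :
      A.callTr q a q' γ → VPA.Step A (q, σ) (PSym.call a) (q', γ :: σ)
  | ret {q q' : Q} {γ : Γ} {σ : List Γ} {a : C} :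
      A.retTr q a γ q' → VPA.Step A (q, γ :: σ) (PSym.ret a) (q', σ)
  | int {q q' : Q} {σ : List Γ} {a : I} :
      A.intTr q a q' → VPA.Step A (q, σ) (PSym.int a) (q', σ)

/-- A run of a VPA labeled by a word, between two configurations. -/
inductive VPA.Run {C I Q Γ : Type} (A : VPA C I Q Γ) :
    Q × List Γ → List (PSym C I) → Q × List Γ → Prop
  | refl (c : Q × List Γ) : VPA.Run A c [] c
  | step {c c' c'' : Q × List Γ} {a : PSym C I} {w : List (PSym C I)} :
      VPA.Step A c a c' → VPA.Run A c' w c'' → VPA.Run A c (a :: w) c''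

/-- Acceptance: a run from an initial configuration (initial state, empty stack)
to a final configuration (final state, empty stack). -/
def VPA.Accepts {C I Q Γ : Type} (A : VPA C I Q Γ) (w : List (PSym C I)) : Prop :=
  ∃ q₀ ∈ A.init, ∃ qf ∈ A.final, VPA.Run A (q₀, []) w (qf, [])

/-- A VPA is deterministic if it has a single initial state and no two distinct
transitions share the same left-hand side. -/
def VPA.Deterministic {C I Q Γ : Type} (A : VPA C I Q Γ) : Prop :=
  (∃ q₀ : Q, A.init = {q₀}) ∧
  (∀ q a q₁ γ₁ q₂ γ₂, A.callTr q a q₁ γ₁ → A.callTr q a q₂ γ₂ → q₁ = q₂ ∧ γ₁ = γ₂) ∧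
  (∀ q a γ q₁ q₂, A.retTr q a γ q₁ → A.retTr q a γ q₂ → q₁ = q₂) ∧
  (∀ q a q₁ q₂, A.intTr q a q₁ → A.intTr q a q₂ → q₁ = q₂)

/-- A 1-SEVPA: a deterministic VPA with single initial state `q₀`, stack alphabet
`Q × C`, all of whose call transitions go to `q₀` pushing (source state, call symbol). -/
def VPA.IsOneSEVPA {C I Q : Type} (A : VPA C I Q (Q × C)) (q₀ : Q) : Prop :=
  A.Deterministic ∧ A.init = {q₀} ∧
  ∀ q a q' γ, A.callTr q a q' γ → q' = q₀ ∧ γ = (q, a)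

theorem VPA.Run.trans' {C I Q Γ : Type} {A : VPA C I Q Γ} {c c' c'' : Q × List Γ}
    {w w' : List (PSym C I)} (h : A.Run c w c') (h' : A.Run c' w' c'') :
    A.Run c (w ++ w') c'' := by
  induction h with
  | refl => exact h'
  | step s _ ih => exact .step s (ih h')

/-- `r` is reachable from `q₀` by a stack-neutral run, for every stack. -/
def NeutralReach {C I Q : Type} (A : VPA C I Q (Q × C)) (q₀ r : Q) : Prop :=
  ∀ σ : List (Q × C), ∃ s : List (PSym C I), A.Run (q₀, σ) s (r, σ)

/-- The stack symbol `γ` can be pushed while going from `q₀` back to `q₀`. -/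
def Pushable {C I Q : Type} (A : VPA C I Q (Q × C)) (q₀ : Q) (γ : Q × C) : Prop :=
  ∃ (r : Q) (a : C), NeutralReach A q₀ r ∧ A.callTr r a q₀ γ

theorem key_invariant {C I Q : Type} {A : VPA C I Q (Q × C)} {q₀ : Q}
    (h : A.IsOneSEVPA q₀) :
    ∀ {c c' : Q × List (Q × C)} {w : List (PSym C I)}, A.Run c w c' →
      NeutralReach A q₀ c.1 → (∀ γ ∈ c.2, Pushable A q₀ γ) →
      NeutralReach A q₀ c'.1 ∧ ∀ γ ∈ c'.2, Pushable A q₀ γ := by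
  intro c c' w hr
  induction hr with
  | refl => exact fun h1 h2 => ⟨h1, h2⟩
  | step s _ ih =>
    intro h1 h2
    cases s with
    | @call q q' γ σ a ht =>
      obtain ⟨hq', hγ⟩ := h.2.2 _ _ _ _ ht
      subst hq'; subst hγ
      apply ih
      · intro σ'; exact ⟨[], .refl _⟩
      · intro γ hγ
        rcases List.mem_cons.1 hγ with rfl | hγ'
        · exact ⟨_, _, h1, ht⟩
        · exact h2 _ hγ'
    | @ret q q' γ σ a ht =>
      apply ih
      · intro σ'
        obtain ⟨r, a', hNR, hc⟩ := h2 _ List.mem_cons_self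
        obtain ⟨s1, hs1⟩ := hNR σ'
        obtain ⟨s2, hs2⟩ := h1 (γ :: σ')
        exact ⟨_, hs1.trans' ((VPA.Run.step (.call hc) hs2).trans'
            (.step (.ret ht) (.refl _)))⟩
      · intro γ' hγ'; exact h2 _ (List.mem_cons_of_mem _ hγ')
    | @int q q' σ a ht =>
      apply ih
      · intro σ'
        obtain ⟨s1, hs1⟩ := h1 σ'
        exact ⟨_, hs1.trans' (.step (.int ht) (.refl _))⟩
      · exact h2

theorem build_stack {C I Q : Type} {A : VPA C I Q (Q × C)} {q₀ : Q}
    {σ : List (Q × C)} (hp : ∀ γ ∈ σ, Pushable A q₀ γ) :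
    ∃ w : List (PSym C I), A.Run (q₀, []) w (q₀, σ) := by
  induction σ with
  | nil => exact ⟨[], .refl _⟩
  | cons γ σ' ih =>
    obtain ⟨w, hw⟩ := ih fun γ' hγ' => hp _ (List.mem_cons_of_mem _ hγ')
    obtain ⟨r, a, hNR, hc⟩ := hp _ List.mem_cons_self
    obtain ⟨s, hs⟩ := hNR σ'
    exact ⟨_, (hw.trans' hs).trans' (.step (.call hc) (.refl _))⟩

/-- In a 1-SEVPA in which every state is reachable, a state `p` is not a bin
state iff there are runs `(q₀, ε) →ʷ (q₀, σ)` and `(p, σ) →ʷ' (q, ε)` with `q`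
final. -/
theorem not_bin_iff_mem_R {C I Q : Type} (A : VPA C I Q (Q × C)) (q₀ : Q)
    (h : A.IsOneSEVPA q₀)
    (hreach : ∀ p : Q, ∃ (w : List (PSym C I)) (σ : List (Q × C)),
      VPA.Run A (q₀, []) w (p, σ))
    (p : Q) :
    (∃ (w : List (PSym C I)) (σ : List (Q × C)) (w' : List (PSym C I)) (q : Q),
        q ∈ A.final ∧ VPA.Run A (q₀, []) w (p, σ) ∧ VPA.Run A (p, σ) w' (q, [])) ↔
    (∃ (w w' : List (PSym C I)) (σ : List (Q × C)) (q : Q),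
        q ∈ A.final ∧ VPA.Run A (q₀, []) w (q₀, σ) ∧
        VPA.Run A (p, σ) w' (q, [])) := by
  constructor
  · rintro ⟨w, σ, w', q, hq, hw, hw'⟩
    obtain ⟨-, hpush⟩ := key_invariant h hw (fun _ => ⟨[], .refl _⟩) (by simp)
    obtain ⟨w₀, hw₀⟩ := build_stack hpush
    exact ⟨w₀, w', σ, q, hq, hw₀, hw'⟩
  · rintro ⟨w, w', σ, q, hq, hw, hw'⟩
    obtain ⟨u, τ, hu⟩ := hreach p
    obtain ⟨hNR, -⟩ := key_invariant h hu (fun _ => ⟨[], .refl _⟩) (by simp)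
    obtain ⟨s, hs⟩ := hNR σ
    exact ⟨w ++ s, σ, w', q, hq, hw.trans' hs, hw'⟩
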